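/- Let G be a finite group and π a normalized U(1)-valued 4-cocycle on G, and let t²(π) := t(t(π)) be the 2-cocycle on the double loop groupoid Λ²G obtained by transgressing the 3-cocycle t(π) on ΛG. Then: (i) t²(π)((e, a) → h, (e, h⁻¹ah) → h') = 1 for all a, h, h' ∈ G, where e is the identity of G; and (ii) consequently, the linear span of the basis vectors |(e,a) → h⟩ (a, h ∈ G) inside the twisted groupoid algebra ℂ[Λ²G]^{t²(π)} is closed under the product ⋆, and, with unit Σ_{a ∈ G} |(e,a) → e⟩, the map |(e,a) → h⟩ ↦ |a → h⟩ is an isomorphism of unital ℂ-algebras onto the untwisted groupoid algebra ℂ[ΛG]. -/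

import Mathlib

/-- A normalized `U(1)`-valued 4-cocycle on a group `G`. -/
structure FourCocycle (G : Type) [Group G] : Type where
  toFun : G → G → G → G → ℂ
  abs_toFun : ∀ a b c d : G, ‖toFun a b c d‖ = 1
  cocycle : ∀ g₁ g₂ g₃ g₄ g₅ : G,
    toFun g₂ g₃ g₄ g₅ * toFun g₁ (g₂ * g₃) g₄ g₅ * toFun g₁ g₂ g₃ (g₄ * g₅)
      = toFun (g₁ * g₂) g₃ g₄ g₅ * toFun g₁ g₂ (g₃ * g₄) g₅ * toFun g₁ g₂ g₃ g₄
  normalized : ∀ a b c d : G, a = 1 ∨ b = 1 ∨ c = 1 ∨ d = 1 → toFun a b c d = 1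

/-- Conjugation `x^y = y⁻¹ x y` in a group. -/
def cj {G : Type} [Group G] (x y : G) : G := y⁻¹ * x * y

/-- The transgression `t(π)` of a 4-cocycle `π` on `G`, a 3-cocycle on the loop groupoid
`ΛG`, evaluated on the composable triple `(a → b, a^b → c, a^{bc} → d)`:
`t(π) = π(b, a^b, c, d) π(b, c, d, a^{bcd}) π(a,b,c,d)⁻¹ π(b, c, a^{bc}, d)⁻¹`. -/
noncomputable def tpi {G : Type} [Group G] (π : FourCocycle G) (a b c d : G) : ℂ :=
  π.toFun b (cj a b) c d * π.toFun b c d (cj a (b * c * d)) *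
    (π.toFun a b c d)⁻¹ * (π.toFun b c (cj a (b * c)) d)⁻¹

/-- The double transgression `t²(π) = t(t(π))`, a 2-cocycle on the double loop groupoid
`Λ²G`, evaluated on the composable pair `((x,a) → h, (x^h,a^h) → h')`:
`t²(π) = t(π)(x;a,h,h') · t(π)(x;h,h',a^{hh'}) · t(π)(x;h,a^h,h')⁻¹`. -/
noncomputable def t2pi {G : Type} [Group G] (π : FourCocycle G) (x a h h' : G) : ℂ :=
  tpi π x a h h' * tpi π x h h' (cj a (h * h')) * (tpi π x h (cj a h) h')⁻¹

/-- Morphisms of the double loop groupoid `Λ²G`: triples `(x, a, h)` with `x a = a x`,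
representing the morphism `((x,a) → h)`. -/
abbrev L2Mor (G : Type) [Group G] : Type := {p : G × G × G // p.1 * p.2.1 = p.2.1 * p.1}

section

variable {G : Type} [Group G] [Fintype G] [DecidableEq G]

/-- The basis vector `|(x,a) → h⟩` of `ℂ[Λ²G]^{t²(π)}`. -/
noncomputable def bv2L (p : L2Mor G) : L2Mor G → ℂ := fun m => if m = p then 1 else 0

/-- The product of the twisted groupoid algebra `ℂ[Λ²G]^{t²(π)}`:
`|(x,a) → h⟩ ⋆ |(x',a') → h'⟩ = δ_{(x',a'),(x^h,a^h)} t²(π)(x,a,h,h') |(x,a) → hh'⟩`. -/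
noncomputable def mul2L (π : FourCocycle G) (x y : L2Mor G → ℂ) : L2Mor G → ℂ :=
  fun m => ∑ p : L2Mor G, ∑ q : L2Mor G,
    if p.1.1 = m.1.1 ∧ p.1.2.1 = m.1.2.1 ∧ q.1.1 = cj p.1.1 p.1.2.2 ∧
        q.1.2.1 = cj p.1.2.1 p.1.2.2 ∧ p.1.2.2 * q.1.2.2 = m.1.2.2
    then t2pi π p.1.1 p.1.2.1 p.1.2.2 q.1.2.2 * x p * y q
    else 0

/-- The product of the untwisted groupoid algebra `ℂ[ΛG]`:
`|a → h⟩ ⋆ |a' → h'⟩ = δ_{a', h⁻¹ah} |a → hh'⟩`, on functions on pairs `(a, h)`. -/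
noncomputable def mulLG (x y : G × G → ℂ) : G × G → ℂ :=
  fun m => ∑ p : G × G, ∑ q : G × G,
    if p.1 = m.1 ∧ q.1 = cj p.1 p.2 ∧ p.2 * q.2 = m.2 then x p * y q else 0

/-- The set of elements of `ℂ[Λ²G]^{t²(π)}` supported on the basis vectors `|(e,a) → h⟩`,
i.e. the linear span of these basis vectors. -/
def SuppE (G : Type) [Group G] : Set (L2Mor G → ℂ) :=
  {z | ∀ m : L2Mor G, m.1.1 ≠ 1 → z m = 0}

/-- The linear map determined by `|(e,a) → h⟩ ↦ |a → h⟩`, realized on coordinates. -/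
noncomputable def Theta (G : Type) [Group G] (z : L2Mor G → ℂ) : G × G → ℂ :=
  fun ah => z ⟨(1, ah.1, ah.2), by simp⟩

/-- The element `∑_{a ∈ G} |(e,a) → e⟩` of `ℂ[Λ²G]^{t²(π)}`. -/
noncomputable def uE (G : Type) [Group G] [Fintype G] [DecidableEq G] : L2Mor G → ℂ :=
  ∑ a : G, bv2L (⟨(1, a, 1), by simp⟩ : L2Mor G)

/-- The unit `∑_{a ∈ G} |a → e⟩` of the untwisted groupoid algebra `ℂ[ΛG]`. -/
noncomputable def uLG (G : Type) [Group G] [Fintype G] [DecidableEq G] : G × G → ℂ :=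
  ∑ a : G, (fun m : G × G => if m = (a, 1) then (1 : ℂ) else 0)

end

section Aux

variable {G : Type} [Group G] [Fintype G] [DecidableEq G]

lemma cj_one_left (y : G) : cj (1 : G) y = 1 := by simp [cj]

lemma tpi_one (π : FourCocycle G) (b c d : G) : tpi π 1 b c d = 1 := by
  have h1 := π.normalized b 1 c d (by simp)
  have h2 := π.normalized b c d 1 (by simp)
  have h3 := π.normalized 1 b c d (by simp)
  have h4 := π.normalized b c 1 d (by simp)
  simp [tpi, cj_one_left, h1, h2, h3, h4]

lemma t2pi_one' (π : FourCocycle G) (a h h' : G) : t2pi π 1 a h h' = 1 := by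
  simp [t2pi, tpi_one]

/-- Embedding of pairs into morphisms with source object `(e,a)`. -/
def eL (ah : G × G) : L2Mor G := ⟨(1, ah.1, ah.2), by simp⟩

lemma Theta_apply (z : L2Mor G → ℂ) (ah : G × G) : Theta G z ah = z (eL ah) := rfl

lemma eL_injective : Function.Injective (eL (G := G)) := by
  intro a b hab
  have h := congrArg (fun m : L2Mor G => (m.1.2.1, m.1.2.2)) hab
  simpa [eL] using h

lemma sum_suppE (F : L2Mor G → ℂ) (h : ∀ m : L2Mor G, m.1.1 ≠ 1 → F m = 0) :
    ∑ m : L2Mor G, F m = ∑ ah : G × G, F (eL ah) := by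
  rw [← Finset.sum_image (g := eL) (f := F) (fun x _ y _ hxy => eL_injective hxy)]
  refine (Finset.sum_subset (Finset.subset_univ _) ?_).symm
  intro m _ hm
  refine h m fun h1 => hm ?_
  refine Finset.mem_image.2 ⟨(m.1.2.1, m.1.2.2), Finset.mem_univ _, ?_⟩
  refine Subtype.ext ?_
  show ((1 : G), (↑m : G × G × G).2.1, (↑m : G × G × G).2.2) = ↑m
  apply Prod.ext <;> simp [h1]

lemma uLG_apply (p : G × G) : uLG G p = if p.2 = 1 then 1 else 0 := by
  rcases p with ⟨a, h⟩
  simp only [uLG, Finset.sum_apply]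
  simp [Prod.ext_iff, ite_and]

lemma uE_mem_suppE : uE G ∈ SuppE G := by
  intro m hm
  simp only [uE, Finset.sum_apply, bv2L]
  refine Finset.sum_eq_zero fun a _ => ?_
  exact if_neg fun h => hm (by rw [h])

lemma Theta_uE' : Theta G (uE G) = uLG G := by
  funext ah
  rw [uLG_apply, Theta_apply]
  simp only [uE, Finset.sum_apply, bv2L, eL]
  simp [Subtype.ext_iff, Prod.ext_iff, ite_and]

lemma mul2L_mem_suppE (π : FourCocycle G) {x y : L2Mor G → ℂ}
    (hx : x ∈ SuppE G) (hy : y ∈ SuppE G) : mul2L π x y ∈ SuppE G := by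
  intro m hm
  refine Finset.sum_eq_zero fun p _ => Finset.sum_eq_zero fun q _ => ?_
  split_ifs with hc
  · rw [hx p fun h => hm (hc.1 ▸ h)]; ring
  · rfl

lemma Theta_mul (π : FourCocycle G) {x y : L2Mor G → ℂ}
    (hx : x ∈ SuppE G) (hy : y ∈ SuppE G) :
    Theta G (mul2L π x y) = mulLG (Theta G x) (Theta G y) := by
  funext ah
  rw [Theta_apply]
  unfold mul2L mulLG
  rw [sum_suppE (G := G) _ ?hp]
  case hp =>
    intro p hp
    refine Finset.sum_eq_zero fun q _ => ?_
    split_ifs with hc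
    · rw [hx p hp]; ring
    · rfl
  refine Finset.sum_congr rfl fun p' _ => ?_
  rw [sum_suppE (G := G) _ ?hq]
  case hq =>
    intro q hq
    split_ifs with hc
    · rw [hy q hq]; ring
    · rfl
  refine Finset.sum_congr rfl fun q' _ => ?_
  simp [eL, cj_one_left, t2pi_one', Theta_apply]

lemma Theta_injOn : Set.InjOn (Theta G) (SuppE G) := by
  intro x hx y hy hxy
  funext m
  by_cases hm : m.1.1 = 1
  · have hme : m = eL (m.1.2.1, m.1.2.2) :=
      Subtype.ext (by apply Prod.ext <;> simp [eL, hm])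
    rw [hme]
    exact congrFun hxy (m.1.2.1, m.1.2.2)
  · rw [hx m hm, hy m hm]

lemma Theta_surjOn : Set.SurjOn (Theta G) (SuppE G) Set.univ := by
  intro w _
  refine ⟨fun m => if m.1.1 = 1 then w (m.1.2.1, m.1.2.2) else 0,
    fun m hm => if_neg hm, ?_⟩
  funext ah
  rw [Theta_apply]
  simp [eL]

lemma mulLG_one_left (w : (G × G) → ℂ) : mulLG (uLG G) w = w := by
  funext m
  rcases m with ⟨m1, m2⟩
  have key : ∀ p q : G × G,
      (if p.1 = m1 ∧ q.1 = cj p.1 p.2 ∧ p.2 * q.2 = m2 then uLG G p * w q else 0)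
      = if p = (m1, 1) ∧ q = (m1, m2) then w (m1, m2) else 0 := by
    rintro ⟨p1, p2⟩ ⟨q1, q2⟩
    rw [uLG_apply]
    split_ifs with h1 h2 h3 h3 <;> simp_all [cj, Prod.ext_iff]
  show (∑ p : G × G, ∑ q : G × G, _) = _
  simp only [key]
  simp [ite_and, Finset.sum_ite_eq']

lemma mulLG_one_right (w : (G × G) → ℂ) : mulLG w (uLG G) = w := by
  funext m
  rcases m with ⟨m1, m2⟩
  have key : ∀ p q : G × G,
      (if p.1 = m1 ∧ q.1 = cj p.1 p.2 ∧ p.2 * q.2 = m2 then w p * uLG G q else 0)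
      = if p = (m1, m2) ∧ q = (cj m1 m2, 1) then w (m1, m2) else 0 := by
    rintro ⟨p1, p2⟩ ⟨q1, q2⟩
    rw [uLG_apply]
    split_ifs with h1 h2 h3 h3 <;> simp_all [cj, Prod.ext_iff]
  show (∑ p : G × G, ∑ q : G × G, _) = _
  simp only [key]
  simp [ite_and, Finset.sum_ite_eq']

end Aux

/-- (i) `t²(π)` is trivial on morphisms out of objects `(e,a)` of `Λ²G`;
(ii) consequently the span of the basis vectors `|(e,a) → h⟩` of `ℂ[Λ²G]^{t²(π)}` is closed
under `⋆` and, with unit `∑_a |(e,a) → e⟩`, the map `|(e,a) → h⟩ ↦ |a → h⟩` is an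
isomorphism of unital `ℂ`-algebras onto the untwisted groupoid algebra `ℂ[ΛG]`. -/
theorem t2pi_trivial_and_subalgebra_iso
    (G : Type) [Group G] [Fintype G] [DecidableEq G] (π : FourCocycle G) :
    (∀ a h h' : G, t2pi π 1 a h h' = 1) ∧
    (∀ x y : L2Mor G → ℂ, x ∈ SuppE G → y ∈ SuppE G → mul2L π x y ∈ SuppE G) ∧
    (∀ x ∈ SuppE G, mul2L π (uE G) x = x ∧ mul2L π x (uE G) = x) ∧
    Set.BijOn (Theta G) (SuppE G) Set.univ ∧
    (∀ x y : L2Mor G → ℂ, x ∈ SuppE G → y ∈ SuppE G →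
      Theta G (mul2L π x y) = mulLG (Theta G x) (Theta G y)) ∧
    (∀ x y : L2Mor G → ℂ, Theta G (x + y) = Theta G x + Theta G y) ∧
    (∀ (c : ℂ) (x : L2Mor G → ℂ), Theta G (c • x) = c • Theta G x) ∧
    Theta G (uE G) = uLG G := by
  
  refine ⟨t2pi_one' π, fun x y hx hy => mul2L_mem_suppE π hx hy,
    fun x hx => ⟨?_, ?_⟩,
    ⟨fun _ _ => Set.mem_univ _, Theta_injOn, Theta_surjOn⟩,
    fun x y hx hy => Theta_mul π hx hy, fun x y => rfl, fun c x => rfl, Theta_uE'⟩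
  · apply Theta_injOn (mul2L_mem_suppE π uE_mem_suppE hx) hx
    rw [Theta_mul π uE_mem_suppE hx, Theta_uE', mulLG_one_left]
  · apply Theta_injOn (mul2L_mem_suppE π hx uE_mem_suppE) hx
    rw [Theta_mul π hx uE_mem_suppE, Theta_uE', mulLG_one_right]
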